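/- Let μ be a partition with ℓ ≥ 1 removable corners, of weights R_1,…,R_ℓ, and ℓ+1 addable corners, of weights A_0,…,A_ℓ. Fix a removable corner of μ of weight R_k and let ν = μ with that cell removed. Then in ℚ(q,t): ∏_{s∈R_{μν}} (t^{l_μ(s)}−q^{a_μ(s)+1})/(t^{l_ν(s)}−q^{a_ν(s)+1}) · ∏_{s∈C_{μν}} (q^{a_μ(s)}−t^{l_μ(s)+1})/(q^{a_ν(s)}−t^{l_ν(s)+1}) = (qt·R_k/M)·∏_{j=0}^{ℓ}(1 − A_j/(qt·R_k)) / ∏_{1≤i≤ℓ, i≠k}(1 − R_i/R_k), where M = (1−t)(1−q). (Equality of the row–column product formula for the e_1^⊥-Pieri coefficient c_{μν} with its corner-weight formula.) -/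

import Mathlib

open scoped Classical
open PowerSeries

noncomputable section

abbrev K := FractionRing (MvPolynomial (Fin 2) ℚ)

def q : K := algebraMap (MvPolynomial (Fin 2) ℚ) K (MvPolynomial.X 0)
def t : K := algebraMap (MvPolynomial (Fin 2) ℚ) K (MvPolynomial.X 1)

/-- the weight of a cell `(i,j)` (row `i`, column `j`) is `t^i * q^j` -/
def w (c : ℕ × ℕ) : K := t ^ c.1 * q ^ c.2

/-- `B_μ = Σ_{c ∈ μ} w(c)` -/
def Bsum (μ : YoungDiagram) : K := ∑ c ∈ μ.cells, w c

/-- a removable corner: a cell of `μ` whose removal leaves a Young diagram -/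
def IsRemovable (μ : YoungDiagram) (c : ℕ × ℕ) : Prop :=
  c ∈ μ ∧ IsLowerSet (↑(μ.cells.erase c) : Set (ℕ × ℕ))

/-- an addable corner: a cell not in `μ` whose addition gives a Young diagram -/
def IsAddable (μ : YoungDiagram) (c : ℕ × ℕ) : Prop :=
  c ∉ μ ∧ IsLowerSet (↑(insert c μ.cells) : Set (ℕ × ℕ))

/-- the arm of a cell: number of cells of `μ` strictly east of it in its row -/
def arm (μ : YoungDiagram) (c : ℕ × ℕ) : ℕ :=
  (μ.cells.filter fun d => d.1 = c.1 ∧ c.2 < d.2).card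

/-- the leg of a cell: number of cells of `μ` strictly north of it in its column -/
def leg (μ : YoungDiagram) (c : ℕ × ℕ) : ℕ :=
  (μ.cells.filter fun d => d.2 = c.2 ∧ c.1 < d.1).card



section AuxLemmas
open Finset

lemma algMap_inj : Function.Injective (algebraMap (MvPolynomial (Fin 2) ℚ) K) :=
  IsFractionRing.injective _ _

lemma w_def' (i j : ℕ) : w (i,j) = algebraMap (MvPolynomial (Fin 2) ℚ) K
    (MvPolynomial.X 1 ^ i * MvPolynomial.X 0 ^ j) := by
  simp [w, q, t, map_mul, map_pow]

lemma w_injective : Function.Injective w := by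
  rintro ⟨a,b⟩ ⟨c,d⟩ h
  rw [w_def', w_def'] at h
  have h2 := algMap_inj h
  simp only [MvPolynomial.X_pow_eq_monomial, MvPolynomial.monomial_mul, one_mul,
    MvPolynomial.monomial_eq_monomial_iff] at h2
  rcases h2 with h2 | h2
  · have ha := DFunLike.congr_fun h2.1 1
    have hb := DFunLike.congr_fun h2.1 0
    simp [Finsupp.single_apply] at ha hb
    simp [ha, hb]
  · exact absurd h2.1 one_ne_zero

lemma t_ne_zero : t ≠ 0 := by
  simp only [t, ne_eq, map_eq_zero_iff _ algMap_inj]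
  exact MvPolynomial.X_ne_zero _

lemma q_ne_zero : q ≠ 0 := by
  simp only [q, ne_eq, map_eq_zero_iff _ algMap_inj]
  exact MvPolynomial.X_ne_zero _

lemma w_ne_zero (x : ℕ × ℕ) : w x ≠ 0 :=
  mul_ne_zero (pow_ne_zero _ t_ne_zero) (pow_ne_zero _ q_ne_zero)

lemma w_sub_ne {x y : ℕ × ℕ} (h : x ≠ y) : w x - w y ≠ 0 :=
  sub_ne_zero.mpr fun e => h (w_injective e)

lemma one_sub_q_ne : (1 : K) - q ≠ 0 := by
  have := w_sub_ne (x := (0,0)) (y := (0,1)) (by decide)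
  simpa [w] using this

lemma one_sub_t_ne : (1 : K) - t ≠ 0 := by
  have := w_sub_ne (x := (0,0)) (y := (1,0)) (by decide)
  simpa [w] using this

lemma core_card (m : ℕ) (c : ℕ → ℕ) :
    ((range (m+1)).filter (fun j => j = 0 ∨ c j < c (j-1))).card
      = ((range m).filter (fun j => c (j+1) < c j)).card + 1 := by
  have hins : (range (m+1)).filter (fun j => j = 0 ∨ c j < c (j-1))
      = insert 0 (((range m).filter (fun j => c (j+1) < c j)).image (· + 1)) := by
    ext a
    simp only [mem_filter, mem_range, mem_insert, mem_image]
    constructor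
    · rintro ⟨ha, h0 | hlt⟩
      · exact Or.inl h0
      · rcases Nat.eq_zero_or_pos a with rfl | hpos
        · exact Or.inl rfl
        · refine Or.inr ⟨a - 1, ⟨⟨by omega, by
            have : a - 1 + 1 = a := by omega
            rw [this]; exact hlt⟩, by omega⟩⟩
    · rintro (rfl | ⟨b, ⟨⟨hb, hlt⟩, rfl⟩⟩)
      · exact ⟨by omega, Or.inl rfl⟩
      · exact ⟨by omega, Or.inr (by simpa using hlt)⟩
  rw [hins, card_insert_of_notMem (by simp), card_image_of_injective _ fun x y h => by omega]

lemma core (T Q WW : K) (n m : ℕ) (c : ℕ → ℕ)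
    (hT : T ≠ 0) (hQ : Q ≠ 0)
    (hanti : ∀ j, j < m → c (j+1) ≤ c j)
    (hge : ∀ j, j ≤ m → n + 1 ≤ c j)
    (hcm : c m = n + 1)
    (hW : WW = T^(n+1) * Q^(m+1))
    (hne1 : T^(n+1) * Q^m - WW ≠ 0)
    (hne2 : ∀ j, j < m → T^(c j) * Q^j - T^(n+1) * Q^m ≠ 0) :
    ∏ j ∈ range m, (T^(c j - (n+1)) - Q^(m-j+1)) / (T^(c j - (n+1)) - Q^(m-j))
    = Q^m * (∏ j ∈ (range (m+1)).filter (fun j => j = 0 ∨ c j < c (j-1)), (T^(c j) * Q^j - WW))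
      / ((T^(n+1) * Q^m - WW) *
         ∏ j ∈ (range m).filter (fun j => c (j+1) < c j), (Q * (T^(c j) * Q^j) - WW)) := by
  set V : K := T^(n+1) * Q^m with hV
  have h1 : ∀ j ∈ range m, (T^(c j - (n+1)) - Q^(m-j+1)) / (T^(c j - (n+1)) - Q^(m-j))
      = (T^(c j)*Q^j - WW) / (T^(c j)*Q^j - V) := by
    intro j hj
    rw [mem_range] at hj
    have hX : (T^(n+1) * Q^j) ≠ 0 := mul_ne_zero (pow_ne_zero _ hT) (pow_ne_zero _ hQ)
    have e1 : T^(c j - (n+1)) * T^(n+1) = T^(c j) := by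
      rw [← pow_add]; congr 1; have := hge j hj.le; omega
    have e2 : Q^(m-j+1) * Q^j = Q^(m+1) := by rw [← pow_add]; congr 1; omega
    have e3 : Q^(m-j) * Q^j = Q^m := by rw [← pow_add]; congr 1; omega
    have hnum : T^(c j)*Q^j - WW = (T^(c j - (n+1)) - Q^(m-j+1)) * (T^(n+1) * Q^j) := by
      rw [hW, ← e1, ← e2]; ring
    have hden : T^(c j)*Q^j - V = (T^(c j - (n+1)) - Q^(m-j)) * (T^(n+1) * Q^j) := by
      rw [hV, ← e1, ← e3]; ring
    rw [hnum, hden, mul_div_mul_right _ _ hX]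
  rw [Finset.prod_congr rfl h1, prod_div_distrib]
  have h3 : (∏ j ∈ range m, (T^(c j)*Q^j - V)) * Q^m
      = ∏ j ∈ range m, (Q*(T^(c j)*Q^j) - WW) := by
    have : Q^m = ∏ _j ∈ range m, Q := by rw [prod_const, card_range]
    rw [this, ← prod_mul_distrib]
    refine prod_congr rfl fun j _ => ?_
    have : Q * V = WW := by rw [hV, hW]; ring
    rw [← this]; ring
  have h4 : ∏ j ∈ (range m).filter (fun j => ¬ c (j+1) < c j), (Q*(T^(c j)*Q^j) - WW)
      = ∏ j ∈ (range (m+1)).filter (fun j => ¬(j = 0 ∨ c j < c (j-1))), (T^(c j)*Q^j - WW) := by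
    have hmem1 : ∀ a ∈ (range m).filter (fun j => ¬ c (j+1) < c j),
        a + 1 ∈ (range (m+1)).filter (fun j => ¬(j = 0 ∨ c j < c (j-1))) := by
      intro a ha
      simp only [mem_filter, mem_range] at ha ⊢
      refine ⟨by omega, ?_⟩
      rintro (h0 | hlt)
      · omega
      · rw [Nat.add_sub_cancel] at hlt
        exact ha.2 hlt
    have hmem2 : ∀ a ∈ (range (m+1)).filter (fun j => ¬(j = 0 ∨ c j < c (j-1))),
        a - 1 ∈ (range m).filter (fun j => ¬ c (j+1) < c j) := by
      intro a ha
      simp only [mem_filter, mem_range] at ha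
      push_neg at ha
      have ha0 : a ≠ 0 := ha.2.1
      have hanlt := ha.2.2
      simp only [mem_filter, mem_range]
      have hrw : a - 1 + 1 = a := by omega
      refine ⟨by omega, ?_⟩
      rw [hrw]
      omega
    refine prod_nbij' (fun j => j + 1) (fun j => j - 1) hmem1 hmem2 ?_ ?_ ?_
    · intro a _
      show a + 1 - 1 = a
      omega
    · intro a ha
      simp only [mem_filter, mem_range] at ha
      push_neg at ha
      show a - 1 + 1 = a
      omega
    · intro a ha
      simp only [mem_filter, mem_range] at ha
      have hle := hanti a ha.1
      have heq : c (a+1) = c a := by omega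
      show Q * (T ^ c a * Q ^ a) - WW = T ^ c (a+1) * Q ^ (a+1) - WW
      rw [heq, pow_succ]
      ring
  have hQuV : ∀ j, j < m → (Q*(T^(c j)*Q^j) - WW) = Q * (T^(c j)*Q^j - V) := by
    intro j hj
    have : Q * V = WW := by rw [hV, hW]; ring
    rw [← this]; ring
  have hD1 : (∏ j ∈ range m, (T^(c j)*Q^j - V)) ≠ 0 :=
    prod_ne_zero_iff.mpr fun j hj => hne2 j (mem_range.mp hj)
  have hD2 : ((T^(n+1) * Q^m - WW) *
      ∏ j ∈ (range m).filter (fun j => c (j+1) < c j), (Q * (T^(c j) * Q^j) - WW)) ≠ 0 := by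
    refine mul_ne_zero hne1 (prod_ne_zero_iff.mpr fun j hj => ?_)
    rw [mem_filter, mem_range] at hj
    rw [hQuV j hj.1]
    exact mul_ne_zero hQ (hne2 j hj.1)
  rw [div_eq_div_iff hD1 hD2]
  have E1 : (∏ j ∈ range m, (T^(c j)*Q^j - WW)) * (V - WW)
      = (∏ j ∈ (range (m+1)).filter (fun j => j = 0 ∨ c j < c (j-1)), (T^(c j)*Q^j - WW)) *
        (∏ j ∈ (range (m+1)).filter (fun j => ¬(j = 0 ∨ c j < c (j-1))), (T^(c j)*Q^j - WW)) := by
    rw [prod_filter_mul_prod_filter_not]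
    rw [prod_range_succ, hcm, hV]
  have E2 : (∏ j ∈ range m, (T^(c j)*Q^j - V)) * Q^m
      = (∏ j ∈ (range m).filter (fun j => c (j+1) < c j), (Q*(T^(c j)*Q^j) - WW)) *
        (∏ j ∈ (range (m+1)).filter (fun j => ¬(j = 0 ∨ c j < c (j-1))), (T^(c j)*Q^j - WW)) := by
    rw [h3, ← h4, prod_filter_mul_prod_filter_not]
  linear_combination
    (∏ j ∈ (range m).filter (fun j => c (j+1) < c j), (Q*(T^(c j)*Q^j) - WW)) * E1
    - (∏ j ∈ (range (m+1)).filter (fun j => j = 0 ∨ c j < c (j-1)), (T^(c j)*Q^j - WW)) * E2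

end AuxLemmas

namespace Helpers
open YoungDiagram

lemma rowLen_eq_of {μ : YoungDiagram} {i L : ℕ} (h : ∀ j, (i, j) ∈ μ ↔ j < L) :
    μ.rowLen i = L := by
  refine le_antisymm ?_ ?_
  · by_contra hc
    push_neg at hc
    have := (h L).mp (mem_iff_lt_rowLen.mpr hc)
    omega
  · rcases Nat.eq_zero_or_pos L with rfl | hL
    · omega
    · have := mem_iff_lt_rowLen.mp ((h (L-1)).mpr (by omega))
      omega

lemma colLen_eq_of {μ : YoungDiagram} {j L : ℕ} (h : ∀ i, (i, j) ∈ μ ↔ i < L) :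
    μ.colLen j = L := by
  refine le_antisymm ?_ ?_
  · by_contra hc
    push_neg at hc
    have := (h L).mp (mem_iff_lt_colLen.mpr hc)
    omega
  · rcases Nat.eq_zero_or_pos L with rfl | hL
    · omega
    · have := mem_iff_lt_colLen.mp ((h (L-1)).mpr (by omega))
      omega

lemma isRemovable_iff (μ : YoungDiagram) (i j : ℕ) :
    IsRemovable μ (i, j) ↔ μ.rowLen i = j + 1 ∧ μ.colLen j = i + 1 := by
  constructor
  · rintro ⟨hmem, hlow⟩
    have hr1 : (i, j+1) ∉ μ := by
      intro hmem'
      have h1 : ((i, j+1) : ℕ × ℕ) ∈ (↑(μ.cells.erase (i,j)) : Set (ℕ × ℕ)) := by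
        rw [Finset.mem_coe, Finset.mem_erase]
        exact ⟨by simp, hmem'⟩
      have h2 := hlow (a := (i, j+1)) (b := (i,j)) (Prod.mk_le_mk.mpr ⟨le_refl _, by omega⟩) h1
      rw [Finset.mem_coe, Finset.mem_erase] at h2
      exact h2.1 rfl
    have hc1 : (i+1, j) ∉ μ := by
      intro hmem'
      have h1 : ((i+1, j) : ℕ × ℕ) ∈ (↑(μ.cells.erase (i,j)) : Set (ℕ × ℕ)) := by
        rw [Finset.mem_coe, Finset.mem_erase]
        exact ⟨by simp, hmem'⟩
      have h2 := hlow (a := (i+1, j)) (b := (i,j)) (Prod.mk_le_mk.mpr ⟨by omega, le_refl _⟩) h1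
      rw [Finset.mem_coe, Finset.mem_erase] at h2
      exact h2.1 rfl
    have hm1 := mem_iff_lt_rowLen.mp hmem
    have hm2 := mem_iff_lt_colLen.mp hmem
    rw [mem_iff_lt_rowLen] at hr1
    rw [mem_iff_lt_colLen] at hc1
    omega
  · rintro ⟨hrow, hcol⟩
    have hmem : (i, j) ∈ μ := mem_iff_lt_rowLen.mpr (by omega)
    refine ⟨hmem, ?_⟩
    intro x y hyx hx
    rw [Finset.mem_coe, Finset.mem_erase, YoungDiagram.mem_cells] at hx
    rw [Finset.mem_coe, Finset.mem_erase, YoungDiagram.mem_cells]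
    obtain ⟨hxne, hxμ⟩ := hx
    have hyμ : y ∈ μ := μ.isLowerSet hyx hxμ
    refine ⟨?_, hyμ⟩
    rintro rfl
    -- y = (i,j) ≤ x, x ∈ μ, x ≠ (i,j)
    obtain ⟨x1, x2⟩ := x
    obtain ⟨h1, h2⟩ := Prod.mk_le_mk.mp hyx
    rcases Nat.lt_or_ge j x2 with hlt | hge
    · have : (i, j+1) ∈ μ := μ.up_left_mem h1 (by omega) hxμ
      rw [mem_iff_lt_rowLen] at this
      omega
    · have hx2 : x2 = j := by omega
      have hx1 : i < x1 := by
        rcases Nat.lt_or_ge i x1 with h | h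
        · exact h
        · exfalso; exact hxne (by rw [Prod.mk.injEq]; omega)
      have : (i+1, j) ∈ μ := by
        have : ((x1, j) : ℕ × ℕ) ∈ μ := by rwa [hx2] at hxμ
        exact μ.up_left_mem (by omega) (by omega) this
      rw [mem_iff_lt_colLen] at this
      omega

lemma isAddable_iff (μ : YoungDiagram) (i j : ℕ) :
    IsAddable μ (i, j) ↔ μ.rowLen i = j ∧ μ.colLen j = i := by
  constructor
  · rintro ⟨hmem, hlow⟩
    have hrle : μ.rowLen i ≤ j := by
      by_contra hc
      exact hmem (mem_iff_lt_rowLen.mpr (by omega))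
    have hcle : μ.colLen j ≤ i := by
      by_contra hc
      exact hmem (mem_iff_lt_colLen.mpr (by omega))
    have hrge : j ≤ μ.rowLen i := by
      rcases Nat.eq_zero_or_pos j with rfl | hj
      · omega
      · have h1 : ((i, j-1) : ℕ × ℕ) ∈ (↑(insert ((i,j) : ℕ × ℕ) μ.cells) : Set (ℕ × ℕ)) :=
          hlow (a := (i,j)) (b := (i, j-1)) (Prod.mk_le_mk.mpr ⟨le_rfl, by omega⟩) (by simp)
        simp only [Finset.coe_insert, Set.mem_insert_iff, mem_cells] at h1
        rcases h1 with h1 | h1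
        · exfalso
          have := congrArg Prod.snd h1
          simp at this
          omega
        · have := mem_iff_lt_rowLen.mp h1
          omega
    have hcge : i ≤ μ.colLen j := by
      rcases Nat.eq_zero_or_pos i with rfl | hi
      · omega
      · have h1 : ((i-1, j) : ℕ × ℕ) ∈ (↑(insert ((i,j) : ℕ × ℕ) μ.cells) : Set (ℕ × ℕ)) :=
          hlow (a := (i,j)) (b := (i-1, j)) (Prod.mk_le_mk.mpr ⟨by omega, le_rfl⟩) (by simp)
        simp only [Finset.coe_insert, Set.mem_insert_iff, mem_cells] at h1
        rcases h1 with h1 | h1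
        · exfalso
          have := congrArg Prod.fst h1
          simp at this
          omega
        · have := mem_iff_lt_colLen.mp h1
          omega
    omega
  · rintro ⟨hrow, hcol⟩
    have hmem : (i, j) ∉ μ := by
      rw [mem_iff_lt_rowLen]; omega
    refine ⟨hmem, ?_⟩
    intro x y hyx hx
    simp only [Finset.coe_insert, Set.mem_insert_iff, mem_cells] at hx ⊢
    obtain ⟨y1, y2⟩ := y
    rcases hx with rfl | hxμ
    · obtain ⟨h1, h2⟩ := Prod.mk_le_mk.mp hyx
      rcases eq_or_ne (y1, y2) (i, j) with heq | hne
      · exact Or.inl heq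
      · refine Or.inr ?_
        rcases Nat.lt_or_ge y1 i with hlt | hge
        · have hm : (y1, j) ∈ μ := mem_iff_lt_colLen.mpr (by omega)
          exact μ.up_left_mem le_rfl h2 hm
        · have hy1 : y1 = i := by omega
          have hy2 : y2 < j := by
            rcases Nat.lt_or_ge y2 j with h | h
            · exact h
            · exfalso; apply hne; rw [Prod.mk.injEq]; omega
          exact mem_iff_lt_rowLen.mpr (by rw [hy1]; omega)
    · exact Or.inr (μ.isLowerSet hyx hxμ)

lemma arm_eq (μ : YoungDiagram) (i j : ℕ) : arm μ (i, j) = μ.rowLen i - (j+1) := by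
  rw [arm]
  have hset : μ.cells.filter (fun d => d.1 = i ∧ j < d.2)
      = (Finset.Ico (j+1) (μ.rowLen i)).image (fun x => (i, x)) := by
    ext ⟨a, b⟩
    simp only [Finset.mem_filter, mem_cells, Finset.mem_image, Finset.mem_Ico]
    constructor
    · rintro ⟨hmem, rfl, hb⟩
      exact ⟨b, ⟨by omega, mem_iff_lt_rowLen.mp hmem⟩, rfl⟩
    · rintro ⟨x, ⟨h1, h2⟩, heq⟩
      have ha := congrArg Prod.fst heq
      have hb := congrArg Prod.snd heq
      simp only at ha hb
      subst ha; subst hb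
      exact ⟨mem_iff_lt_rowLen.mpr h2, rfl, by omega⟩
  rw [hset, Finset.card_image_of_injective _ (fun a b h => by simpa using congrArg Prod.snd h),
    Nat.card_Ico]

lemma leg_eq (μ : YoungDiagram) (i j : ℕ) : leg μ (i, j) = μ.colLen j - (i+1) := by
  rw [leg]
  have hset : μ.cells.filter (fun d => d.2 = j ∧ i < d.1)
      = (Finset.Ico (i+1) (μ.colLen j)).image (fun x => (x, j)) := by
    ext ⟨a, b⟩
    simp only [Finset.mem_filter, mem_cells, Finset.mem_image, Finset.mem_Ico]
    constructor
    · rintro ⟨hmem, rfl, ha⟩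
      exact ⟨a, ⟨by omega, mem_iff_lt_colLen.mp hmem⟩, rfl⟩
    · rintro ⟨x, ⟨h1, h2⟩, heq⟩
      have ha := congrArg Prod.fst heq
      have hb := congrArg Prod.snd heq
      simp only at ha hb
      subst ha; subst hb
      exact ⟨mem_iff_lt_colLen.mpr h2, rfl, by omega⟩
  rw [hset, Finset.card_image_of_injective _ (fun a b h => by simpa using congrArg Prod.fst h),
    Nat.card_Ico]

lemma addable_col (μ : YoungDiagram) (m : ℕ) (Add : Finset (ℕ × ℕ))
    (hAdd : ∀ x, x ∈ Add ↔ IsAddable μ x) :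
    Add.filter (fun a => a.2 ≤ m)
      = ((Finset.range (m+1)).filter
          (fun j => j = 0 ∨ μ.colLen j < μ.colLen (j-1))).image (fun j => (μ.colLen j, j)) := by
  ext ⟨a1, a2⟩
  simp only [Finset.mem_filter, Finset.mem_image, Finset.mem_range, hAdd, isAddable_iff]
  constructor
  · rintro ⟨⟨hrl, hcl⟩, ha2⟩
    refine ⟨a2, ⟨by omega, ?_⟩, by rw [hcl]⟩
    rcases Nat.eq_zero_or_pos a2 with rfl | hpos
    · exact Or.inl rfl
    · refine Or.inr ?_
      have hm : (a1, a2 - 1) ∈ μ := mem_iff_lt_rowLen.mpr (by omega)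
      have := mem_iff_lt_colLen.mp hm
      omega
  · rintro ⟨j, ⟨hj, hcond⟩, heq⟩
    have h1 := congrArg Prod.fst heq
    have h2 := congrArg Prod.snd heq
    simp only at h1 h2
    subst h2
    refine ⟨⟨?_, h1⟩, by omega⟩
    rw [← h1]
    apply rowLen_eq_of
    intro x
    rw [mem_iff_lt_colLen]
    constructor
    · intro hx
      by_contra hc
      push_neg at hc
      have := μ.colLen_anti j x hc
      omega
    · intro hx
      rcases hcond with rfl | hlt
      · omega
      · have := μ.colLen_anti x (j-1) (by omega)
        omega

lemma removable_col (μ : YoungDiagram) (m : ℕ) (Rem : Finset (ℕ × ℕ))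
    (hRem : ∀ x, x ∈ Rem ↔ IsRemovable μ x) :
    Rem.filter (fun x => x.2 < m)
      = ((Finset.range m).filter
          (fun j => μ.colLen (j+1) < μ.colLen j)).image (fun j => (μ.colLen j - 1, j)) := by
  ext ⟨a1, a2⟩
  simp only [Finset.mem_filter, Finset.mem_image, Finset.mem_range, hRem, isRemovable_iff]
  constructor
  · rintro ⟨⟨hrl, hcl⟩, ha2⟩
    refine ⟨a2, ⟨ha2, ?_⟩, by rw [hcl]; simp⟩
    have hnm : (a1, a2+1) ∉ μ := by rw [mem_iff_lt_rowLen]; omega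
    rw [mem_iff_lt_colLen] at hnm
    omega
  · rintro ⟨j, ⟨hj, hlt⟩, heq⟩
    have h1 := congrArg Prod.fst heq
    have h2 := congrArg Prod.snd heq
    simp only at h1 h2
    subst h2
    refine ⟨⟨?_, by omega⟩, hj⟩
    rw [← h1]
    apply rowLen_eq_of
    intro x
    rw [mem_iff_lt_colLen]
    constructor
    · intro hx
      by_contra hc
      push_neg at hc
      have := μ.colLen_anti (j+1) x hc
      omega
    · intro hx
      have := μ.colLen_anti x j (by omega)
      omega
  
lemma addable_row (μ : YoungDiagram) (n : ℕ) (Add : Finset (ℕ × ℕ))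
    (hAdd : ∀ x, x ∈ Add ↔ IsAddable μ x) :
    Add.filter (fun a => a.1 ≤ n)
      = ((Finset.range (n+1)).filter
          (fun i => i = 0 ∨ μ.rowLen i < μ.rowLen (i-1))).image (fun i => (i, μ.rowLen i)) := by
  ext ⟨a1, a2⟩
  simp only [Finset.mem_filter, Finset.mem_image, Finset.mem_range, hAdd, isAddable_iff]
  constructor
  · rintro ⟨⟨hrl, hcl⟩, ha1⟩
    refine ⟨a1, ⟨by omega, ?_⟩, by rw [hrl]⟩
    rcases Nat.eq_zero_or_pos a1 with rfl | hpos
    · exact Or.inl rfl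
    · refine Or.inr ?_
      have hm : (a1 - 1, a2) ∈ μ := mem_iff_lt_colLen.mpr (by omega)
      have := mem_iff_lt_rowLen.mp hm
      omega
  · rintro ⟨i, ⟨hi, hcond⟩, heq⟩
    have h1 := congrArg Prod.fst heq
    have h2 := congrArg Prod.snd heq
    simp only at h1 h2
    subst h1
    refine ⟨⟨h2, ?_⟩, by omega⟩
    rw [← h2]
    apply colLen_eq_of
    intro x
    rw [mem_iff_lt_rowLen]
    constructor
    · intro hx
      by_contra hc
      push_neg at hc
      have := μ.rowLen_anti i x hc
      omega
    · intro hx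
      rcases hcond with rfl | hlt
      · omega
      · have := μ.rowLen_anti x (i-1) (by omega)
        omega

lemma removable_row (μ : YoungDiagram) (n : ℕ) (Rem : Finset (ℕ × ℕ))
    (hRem : ∀ x, x ∈ Rem ↔ IsRemovable μ x) :
    Rem.filter (fun x => x.1 < n)
      = ((Finset.range n).filter
          (fun i => μ.rowLen (i+1) < μ.rowLen i)).image (fun i => (i, μ.rowLen i - 1)) := by
  ext ⟨a1, a2⟩
  simp only [Finset.mem_filter, Finset.mem_image, Finset.mem_range, hRem, isRemovable_iff]
  constructor
  · rintro ⟨⟨hrl, hcl⟩, ha1⟩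
    refine ⟨a1, ⟨ha1, ?_⟩, by rw [hrl]; simp⟩
    have hnm : (a1+1, a2) ∉ μ := by rw [mem_iff_lt_colLen]; omega
    rw [mem_iff_lt_rowLen] at hnm
    omega
  · rintro ⟨i, ⟨hi, hlt⟩, heq⟩
    have h1 := congrArg Prod.fst heq
    have h2 := congrArg Prod.snd heq
    simp only at h1 h2
    subst h1
    refine ⟨⟨by omega, ?_⟩, hi⟩
    rw [← h2]
    apply colLen_eq_of
    intro x
    rw [mem_iff_lt_rowLen]
    constructor
    · intro hx
      by_contra hc
      push_neg at hc
      have := μ.rowLen_anti (i+1) x hc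
      omega
    · intro hx
      have := μ.rowLen_anti x i (by omega)
      omega

end Helpers

set_option maxHeartbeats 2000000 in
/-- equality of the row–column product formula for the `e₁^⊥`-Pieri
coefficient `c_{μν}` with its corner-weight formula. -/
theorem stmt_8 (μ : YoungDiagram) (Rem Add : Finset (ℕ × ℕ))
    (hRem : ∀ x, x ∈ Rem ↔ IsRemovable μ x)
    (hAdd : ∀ x, x ∈ Add ↔ IsAddable μ x)
    (hne : Rem.Nonempty)
    (M : K) (hM : M = (1 - t) * (1 - q))
    (r : ℕ × ℕ) (hr : r ∈ Rem)
    (ν : YoungDiagram) (hν : ν.cells = μ.cells.erase r) :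
    (∏ s ∈ ν.cells.filter (fun s => s.1 = r.1),
        (t ^ leg μ s - q ^ (arm μ s + 1)) / (t ^ leg ν s - q ^ (arm ν s + 1))) *
      (∏ s ∈ ν.cells.filter (fun s => s.2 = r.2),
        (q ^ arm μ s - t ^ (leg μ s + 1)) / (q ^ arm ν s - t ^ (leg ν s + 1))) =
    q * t * w r / M * (∏ a ∈ Add, (1 - w a / (q * t * w r))) /
      ∏ r' ∈ Rem.erase r, (1 - w r' / w r) := by
  classical
  obtain ⟨n, m⟩ := r
  have hrem : IsRemovable μ (n, m) := (hRem _).mp hr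
  obtain ⟨hrowlen, hcollen⟩ := (Helpers.isRemovable_iff μ n m).mp hrem
  have hrμ : ((n, m) : ℕ × ℕ) ∈ μ := hrem.1
  have hνmem : ∀ x : ℕ × ℕ, x ∈ ν ↔ (x ∈ μ ∧ x ≠ (n, m)) := by
    intro x
    rw [← YoungDiagram.mem_cells, hν, Finset.mem_erase, YoungDiagram.mem_cells]
    tauto
  -- lengths of ν
  have hνrow_n : ν.rowLen n = m := by
    apply Helpers.rowLen_eq_of
    intro x
    rw [hνmem, YoungDiagram.mem_iff_lt_rowLen, hrowlen]
    simp only [ne_eq, Prod.mk.injEq, true_and]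
    omega
  have hνrow : ∀ i, i ≠ n → ν.rowLen i = μ.rowLen i := by
    intro i hi
    apply Helpers.rowLen_eq_of
    intro x
    rw [hνmem, YoungDiagram.mem_iff_lt_rowLen]
    simp only [ne_eq, Prod.mk.injEq]
    constructor
    · rintro ⟨h1, _⟩; exact h1
    · intro h1; exact ⟨h1, by intro h; exact hi h.1⟩
  have hνcol_m : ν.colLen m = n := by
    apply Helpers.colLen_eq_of
    intro x
    rw [hνmem, YoungDiagram.mem_iff_lt_colLen, hcollen]
    simp only [ne_eq, Prod.mk.injEq, and_true]
    omega
  have hνcol : ∀ j, j ≠ m → ν.colLen j = μ.colLen j := by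
    intro j hj
    apply Helpers.colLen_eq_of
    intro x
    rw [hνmem, YoungDiagram.mem_iff_lt_colLen]
    simp only [ne_eq, Prod.mk.injEq]
    constructor
    · rintro ⟨h1, _⟩; exact h1
    · intro h1; exact ⟨h1, by intro h; exact hj h.2⟩
  -- the cells of the row and column products
  have hrowcells : ν.cells.filter (fun s => s.1 = n) = (Finset.range m).image (fun j => (n, j)) := by
    ext ⟨a, b⟩
    simp only [Finset.mem_filter, Finset.mem_image, Finset.mem_range, YoungDiagram.mem_cells]
    constructor
    · rintro ⟨hab, rfl⟩
      obtain ⟨h1, h2⟩ := (hνmem _).mp hab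
      rw [YoungDiagram.mem_iff_lt_rowLen, hrowlen] at h1
      refine ⟨b, ?_, rfl⟩
      rcases Nat.lt_or_ge b m with h | h
      · exact h
      · exfalso; exact h2 (by rw [Prod.mk.injEq]; omega)
    · rintro ⟨j, hj, heq⟩
      have e1 := congrArg Prod.fst heq
      have e2 := congrArg Prod.snd heq
      simp only at e1 e2
      subst e1; subst e2
      refine ⟨(hνmem _).mpr ⟨YoungDiagram.mem_iff_lt_rowLen.mpr (by omega), ?_⟩, rfl⟩
      rw [ne_eq, Prod.mk.injEq]
      omega
  have hcolcells : ν.cells.filter (fun s => s.2 = m) = (Finset.range n).image (fun i => (i, m)) := by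
    ext ⟨a, b⟩
    simp only [Finset.mem_filter, Finset.mem_image, Finset.mem_range, YoungDiagram.mem_cells]
    constructor
    · rintro ⟨hab, rfl⟩
      obtain ⟨h1, h2⟩ := (hνmem _).mp hab
      rw [YoungDiagram.mem_iff_lt_colLen, hcollen] at h1
      refine ⟨a, ?_, rfl⟩
      rcases Nat.lt_or_ge a n with h | h
      · exact h
      · exfalso; exact h2 (by rw [Prod.mk.injEq]; omega)
    · rintro ⟨i, hi, heq⟩
      have e1 := congrArg Prod.fst heq
      have e2 := congrArg Prod.snd heq
      simp only at e1 e2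
      subst e1; subst e2
      refine ⟨(hνmem _).mpr ⟨YoungDiagram.mem_iff_lt_colLen.mpr (by omega), ?_⟩, rfl⟩
      rw [ne_eq, Prod.mk.injEq]
      omega
  -- row product in closed range form
  have hrowprodeq : (∏ s ∈ ν.cells.filter (fun s => s.1 = (n, m).1),
        (t ^ leg μ s - q ^ (arm μ s + 1)) / (t ^ leg ν s - q ^ (arm ν s + 1)))
      = ∏ j ∈ Finset.range m,
          (t ^ (μ.colLen j - (n+1)) - q ^ (m - j + 1)) / (t ^ (μ.colLen j - (n+1)) - q ^ (m - j)) := by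
    show (∏ s ∈ ν.cells.filter (fun s => s.1 = n), _) = _
    rw [hrowcells, Finset.prod_image (fun x _ y _ h => by simpa using congrArg Prod.snd h)]
    refine Finset.prod_congr rfl fun j hj => ?_
    rw [Finset.mem_range] at hj
    rw [Helpers.arm_eq, Helpers.leg_eq, Helpers.arm_eq, Helpers.leg_eq,
        hrowlen, hνrow_n, hνcol j (by omega)]
    have e1 : m + 1 - (j+1) + 1 = m - j + 1 := by omega
    have e2 : m - (j+1) + 1 = m - j := by omega
    rw [e1, e2]
  -- column product in closed range form
  have hcolprodeq : (∏ s ∈ ν.cells.filter (fun s => s.2 = (n, m).2),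
        (q ^ arm μ s - t ^ (leg μ s + 1)) / (q ^ arm ν s - t ^ (leg ν s + 1)))
      = ∏ i ∈ Finset.range n,
          (q ^ (μ.rowLen i - (m+1)) - t ^ (n - i + 1)) / (q ^ (μ.rowLen i - (m+1)) - t ^ (n - i)) := by
    show (∏ s ∈ ν.cells.filter (fun s => s.2 = m), _) = _
    rw [hcolcells, Finset.prod_image (fun x _ y _ h => by simpa using congrArg Prod.fst h)]
    refine Finset.prod_congr rfl fun i hi => ?_
    rw [Finset.mem_range] at hi
    rw [Helpers.arm_eq, Helpers.leg_eq, Helpers.arm_eq, Helpers.leg_eq,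
        hcollen, hνcol_m, hνrow i (by omega)]
    have e1 : n + 1 - (i+1) + 1 = n - i + 1 := by omega
    have e2 : n - (i+1) + 1 = n - i := by omega
    rw [e1, e2]
  -- nonvanishing facts
  have hW0 : q * t * w (n, m) ≠ 0 := mul_ne_zero (mul_ne_zero q_ne_zero t_ne_zero) (w_ne_zero _)
  have hu0 : w (n, m) ≠ 0 := w_ne_zero _
  have hne1r : t^(n+1) * q^m - q * t * w (n, m) ≠ 0 := by
    have h : t^(n+1) * q^m - q * t * w (n, m) = w (n+1, m) - w (n+1, m+1) := by
      simp only [w]; ring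
    rw [h]
    exact w_sub_ne (by simp)
  have hne2r : ∀ j, j < m → t^(μ.colLen j) * q^j - t^(n+1) * q^m ≠ 0 := by
    intro j hj
    have h : t^(μ.colLen j) * q^j - t^(n+1) * q^m = w (μ.colLen j, j) - w (n+1, m) := by
      simp only [w]
    rw [h]
    refine w_sub_ne fun e => ?_
    have := congrArg Prod.snd e
    simp only at this
    omega
  have hne1c : q^(m+1) * t^n - q * t * w (n, m) ≠ 0 := by
    have h : q^(m+1) * t^n - q * t * w (n, m) = w (n, m+1) - w (n+1, m+1) := by
      simp only [w]; ring
    rw [h]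
    exact w_sub_ne (by simp)
  have hne2c : ∀ i, i < n → q^(μ.rowLen i) * t^i - q^(m+1) * t^n ≠ 0 := by
    intro i hi
    have h : q^(μ.rowLen i) * t^i - q^(m+1) * t^n = w (i, μ.rowLen i) - w (n, m+1) := by
      simp only [w]; ring
    rw [h]
    refine w_sub_ne fun e => ?_
    have := congrArg Prod.fst e
    simp only at this
    omega
  -- the two core identities
  have hcore_r := core t q (q * t * w (n, m)) n m μ.colLen t_ne_zero q_ne_zero
      (fun j hj => μ.colLen_anti j (j+1) (by omega))
      (fun j hj => by have := μ.colLen_anti j m hj; omega)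
      hcollen (by simp only [w]; ring) hne1r hne2r
  have hcore_c := core q t (q * t * w (n, m)) m n μ.rowLen q_ne_zero t_ne_zero
      (fun i hi => μ.rowLen_anti i (i+1) (by omega))
      (fun i hi => by have := μ.rowLen_anti i n hi; omega)
      hrowlen (by simp only [w]; ring) hne1c hne2c
  -- convert corner-index products to products over Add/Rem
  have hPA1 : (∏ a ∈ Add.filter (fun a => a.2 ≤ m), (w a - q * t * w (n, m)))
      = ∏ j ∈ (Finset.range (m+1)).filter (fun j => j = 0 ∨ μ.colLen j < μ.colLen (j-1)),
          (t^(μ.colLen j) * q^j - q * t * w (n, m)) := by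
    rw [Helpers.addable_col μ m Add hAdd,
      Finset.prod_image (fun x _ y _ h => by simpa using congrArg Prod.snd h)]
    exact Finset.prod_congr rfl fun j _ => by simp only [w]
  have hPA2 : (∏ a ∈ Add.filter (fun a => a.1 ≤ n), (w a - q * t * w (n, m)))
      = ∏ i ∈ (Finset.range (n+1)).filter (fun i => i = 0 ∨ μ.rowLen i < μ.rowLen (i-1)),
          (q^(μ.rowLen i) * t^i - q * t * w (n, m)) := by
    rw [Helpers.addable_row μ n Add hAdd,
      Finset.prod_image (fun x _ y _ h => by simpa using congrArg Prod.fst h)]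
    refine Finset.prod_congr rfl fun i _ => ?_
    simp only [w]
    ring
  have hPR1 : (∏ x ∈ Rem.filter (fun x => x.2 < m), (q * t * (w x - w (n, m))))
      = ∏ j ∈ (Finset.range m).filter (fun j => μ.colLen (j+1) < μ.colLen j),
          (q * (t^(μ.colLen j) * q^j) - q * t * w (n, m)) := by
    rw [Helpers.removable_col μ m Rem hRem,
      Finset.prod_image (fun x _ y _ h => by simpa using congrArg Prod.snd h)]
    refine Finset.prod_congr rfl fun j hj => ?_
    rw [Finset.mem_filter] at hj
    obtain ⟨d, hd⟩ : ∃ d, μ.colLen j = d + 1 := ⟨μ.colLen j - 1, by omega⟩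
    simp only [w, hd, Nat.add_sub_cancel]
    ring
  have hPR2 : (∏ x ∈ Rem.filter (fun x => x.1 < n), (q * t * (w x - w (n, m))))
      = ∏ i ∈ (Finset.range n).filter (fun i => μ.rowLen (i+1) < μ.rowLen i),
          (t * (q^(μ.rowLen i) * t^i) - q * t * w (n, m)) := by
    rw [Helpers.removable_row μ n Rem hRem,
      Finset.prod_image (fun x _ y _ h => by simpa using congrArg Prod.fst h)]
    refine Finset.prod_congr rfl fun i hi => ?_
    rw [Finset.mem_filter] at hi
    obtain ⟨d, hd⟩ : ∃ d, μ.rowLen i = d + 1 := ⟨μ.rowLen i - 1, by omega⟩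
    simp only [w, hd, Nat.add_sub_cancel]
    ring
  -- splitting of Add and Rem.erase
  have hAsplit : Add.filter (fun a => ¬ a.2 ≤ m) = Add.filter (fun a => a.1 ≤ n) := by
    apply Finset.filter_congr
    intro a ha
    obtain ⟨a1, a2⟩ := a
    obtain ⟨hrl, hcl⟩ := (Helpers.isAddable_iff μ a1 a2).mp ((hAdd _).mp ha)
    simp only
    constructor
    · intro h2
      push_neg at h2
      by_contra hc
      push_neg at hc
      have hr2 : μ.rowLen (n+1) ≤ m := by
        by_contra hc2
        push_neg at hc2
        have hmm : ((n+1, m) : ℕ × ℕ) ∈ μ := YoungDiagram.mem_iff_lt_rowLen.mpr hc2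
        rw [YoungDiagram.mem_iff_lt_colLen, hcollen] at hmm
        omega
      have := μ.rowLen_anti (n+1) a1 hc
      omega
    · intro h1 h2
      have hmm : ((a1, a2) : ℕ × ℕ) ∈ μ := μ.up_left_mem h1 h2 hrμ
      rw [YoungDiagram.mem_iff_lt_rowLen] at hmm
      omega
  have hR1set : (Rem.erase (n,m)).filter (fun x => x.2 < m) = Rem.filter (fun x => x.2 < m) := by
    ext x
    simp only [Finset.mem_filter, Finset.mem_erase]
    constructor
    · rintro ⟨⟨_, h⟩, h2⟩; exact ⟨h, h2⟩
    · rintro ⟨h, h2⟩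
      refine ⟨⟨?_, h⟩, h2⟩
      rintro rfl
      simp only at h2
      omega
  have hR2set : (Rem.erase (n,m)).filter (fun x => ¬ x.2 < m) = Rem.filter (fun x => x.1 < n) := by
    ext ⟨x1, x2⟩
    simp only [Finset.mem_filter, Finset.mem_erase]
    constructor
    · rintro ⟨⟨hne', hx⟩, h2⟩
      push_neg at h2
      obtain ⟨hrl, hcl⟩ := (Helpers.isRemovable_iff μ x1 x2).mp ((hRem _).mp hx)
      refine ⟨hx, ?_⟩
      by_contra hc
      push_neg at hc
      rcases Nat.lt_or_ge n x1 with h | h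
      · have hmem : ((x1, x2) : ℕ × ℕ) ∈ μ := YoungDiagram.mem_iff_lt_rowLen.mpr (by omega)
        have hmm : ((n+1, m) : ℕ × ℕ) ∈ μ := μ.up_left_mem h h2 hmem
        rw [YoungDiagram.mem_iff_lt_colLen, hcollen] at hmm
        omega
      · have hx1 : x1 = n := by omega
        rw [hx1, hrowlen] at hrl
        exact hne' (by rw [Prod.mk.injEq]; omega)
    · rintro ⟨hx, h1⟩
      obtain ⟨hrl, hcl⟩ := (Helpers.isRemovable_iff μ x1 x2).mp ((hRem _).mp hx)
      have hge2 : m + 1 ≤ μ.rowLen x1 := by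
        have := μ.rowLen_anti x1 n (by omega)
        omega
      refine ⟨⟨?_, hx⟩, by omega⟩
      rw [ne_eq, Prod.mk.injEq]
      omega
  -- cardinalities
  have hinjc : ∀ (f : ℕ → ℕ), Function.Injective (fun j => ((f j, j) : ℕ × ℕ)) :=
    fun f x y h => by simpa using congrArg Prod.snd h
  have hinjr : ∀ (f : ℕ → ℕ), Function.Injective (fun i => ((i, f i) : ℕ × ℕ)) :=
    fun f x y h => by simpa using congrArg Prod.fst h
  have hcard1 : (Add.filter (fun a => a.2 ≤ m)).card = (Rem.filter (fun x => x.2 < m)).card + 1 := by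
    rw [Helpers.addable_col μ m Add hAdd, Helpers.removable_col μ m Rem hRem,
      Finset.card_image_of_injective _ (hinjc μ.colLen),
      Finset.card_image_of_injective _ (hinjc (fun j => μ.colLen j - 1)),
      core_card]
  have hcard2 : (Add.filter (fun a => a.1 ≤ n)).card = (Rem.filter (fun x => x.1 < n)).card + 1 := by
    rw [Helpers.addable_row μ n Add hAdd, Helpers.removable_row μ n Rem hRem,
      Finset.card_image_of_injective _ (hinjr μ.rowLen),
      Finset.card_image_of_injective _ (hinjr (fun i => μ.rowLen i - 1)),
      core_card]
  have hAcard : Add.card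
      = (Add.filter (fun a => a.2 ≤ m)).card + (Add.filter (fun a => a.1 ≤ n)).card := by
    rw [← hAsplit, Finset.card_filter_add_card_filter_not]
  have hRcard : (Rem.erase (n,m)).card
      = (Rem.filter (fun x => x.2 < m)).card + (Rem.filter (fun x => x.1 < n)).card := by
    rw [← hR1set, ← hR2set, Finset.card_filter_add_card_filter_not]
  -- product splittings
  have hAprod : (∏ a ∈ Add, (w a - q * t * w (n, m)))
      = (∏ a ∈ Add.filter (fun a => a.2 ≤ m), (w a - q * t * w (n, m))) *
        ∏ a ∈ Add.filter (fun a => a.1 ≤ n), (w a - q * t * w (n, m)) := by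
    rw [← Finset.prod_filter_mul_prod_filter_not Add (fun a => a.2 ≤ m), hAsplit]
  have hRprod : (∏ x ∈ Rem.erase (n,m), (w x - w (n, m)))
      = (∏ x ∈ Rem.filter (fun x => x.2 < m), (w x - w (n, m))) *
        ∏ x ∈ Rem.filter (fun x => x.1 < n), (w x - w (n, m)) := by
    rw [← Finset.prod_filter_mul_prod_filter_not (Rem.erase (n,m)) (fun x => x.2 < m),
      hR1set, hR2set]
  -- nonvanishing of removable products
  have hPR1ne : (∏ x ∈ Rem.filter (fun x => x.2 < m), (w x - w (n, m))) ≠ 0 := by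
    refine Finset.prod_ne_zero_iff.mpr fun x hx => ?_
    rw [Finset.mem_filter] at hx
    refine w_sub_ne fun e => ?_
    rw [e] at hx
    simp only at hx
    omega
  have hPR2ne : (∏ x ∈ Rem.filter (fun x => x.1 < n), (w x - w (n, m))) ≠ 0 := by
    refine Finset.prod_ne_zero_iff.mpr fun x hx => ?_
    rw [Finset.mem_filter] at hx
    refine w_sub_ne fun e => ?_
    rw [e] at hx
    simp only at hx
    omega
  -- RHS rearrangement
  have hAddRHS : (∏ a ∈ Add, (1 - w a / (q * t * w (n, m))))
      = (-1 : K)^(Add.card) * (∏ a ∈ Add, (w a - q * t * w (n, m))) / (q * t * w (n, m))^(Add.card) := by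
    rw [Finset.prod_congr rfl (fun a _ => show (1 : K) - w a / (q * t * w (n, m))
        = (-1) * ((w a - q * t * w (n, m)) / (q * t * w (n, m))) by
      rw [neg_one_mul, sub_div, div_self hW0]; ring)]
    rw [Finset.prod_mul_distrib, Finset.prod_const, Finset.prod_div_distrib, Finset.prod_const]
    ring
  have hRemRHS : (∏ x ∈ Rem.erase (n,m), (1 - w x / w (n, m)))
      = (-1 : K)^((Rem.erase (n,m)).card) * (∏ x ∈ Rem.erase (n,m), (w x - w (n, m)))
        / (w (n, m))^((Rem.erase (n,m)).card) := by
    rw [Finset.prod_congr rfl (fun x _ => show (1 : K) - w x / w (n, m)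
        = (-1) * ((w x - w (n, m)) / w (n, m)) by
      rw [neg_one_mul, sub_div, div_self hu0]; ring)]
    rw [Finset.prod_mul_distrib, Finset.prod_const, Finset.prod_div_distrib, Finset.prod_const]
    ring
  -- pull out the q*t factors
  have hQT1 : (∏ x ∈ Rem.filter (fun x => x.2 < m), (q * t * (w x - w (n, m))))
      = (q*t)^((Rem.filter (fun x => x.2 < m)).card) *
        ∏ x ∈ Rem.filter (fun x => x.2 < m), (w x - w (n, m)) := by
    rw [Finset.prod_mul_distrib, Finset.prod_const]
  have hQT2 : (∏ x ∈ Rem.filter (fun x => x.1 < n), (q * t * (w x - w (n, m))))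
      = (q*t)^((Rem.filter (fun x => x.1 < n)).card) *
        ∏ x ∈ Rem.filter (fun x => x.1 < n), (w x - w (n, m)) := by
    rw [Finset.prod_mul_distrib, Finset.prod_const]
  -- now assemble everything
  set p1 := (Rem.filter (fun x => x.2 < m)).card with hp1
  set p2 := (Rem.filter (fun x => x.1 < n)).card with hp2
  have hAcard' : Add.card = p1 + p2 + 2 := by omega
  have hRcard' : (Rem.erase (n,m)).card = p1 + p2 := by omega
  rw [hrowprodeq, hcolprodeq, hcore_r, hcore_c, ← hPA1, ← hPA2, ← hPR1, ← hPR2,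
    hAddRHS, hRemRHS, hAprod, hRprod, hQT1, hQT2, hAcard', hRcard', hM]
  have hsign : ((-1 : K))^(p1 + p2 + 2) = (-1)^(p1 + p2) := by
    rw [pow_add]
    norm_num
  rw [hsign]
  have hS0' : ((-1 : K))^(p1 + p2) ≠ 0 := pow_ne_zero _ (by norm_num)
  generalize hSdef : ((-1 : K))^(p1 + p2) = S
  have hS0 : S ≠ 0 := hSdef ▸ hS0'
  simp only [w] at *
  have hqne := q_ne_zero
  have htne := t_ne_zero
  have h1q := one_sub_q_ne
  have h1t := one_sub_t_ne
  have hqt : (q*t : K) ≠ 0 := mul_ne_zero q_ne_zero t_ne_zero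
  have hb1 : ((t ^ (n + 1) * q ^ m - q * t * (t ^ n * q ^ m)) *
      ((q * t) ^ p1 * ∏ x ∈ Finset.filter (fun x => x.2 < m) Rem,
        (t ^ x.1 * q ^ x.2 - t ^ n * q ^ m))) ≠ 0 :=
    mul_ne_zero hne1r (mul_ne_zero (pow_ne_zero _ hqt) hPR1ne)
  have hb2 : ((q ^ (m + 1) * t ^ n - q * t * (t ^ n * q ^ m)) *
      ((q * t) ^ p2 * ∏ x ∈ Finset.filter (fun x => x.1 < n) Rem,
        (t ^ x.1 * q ^ x.2 - t ^ n * q ^ m))) ≠ 0 :=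
    mul_ne_zero hne1c (mul_ne_zero (pow_ne_zero _ hqt) hPR2ne)
  rw [div_mul_div_comm, div_mul_div_comm, div_div_div_eq,
    div_eq_div_iff (mul_ne_zero hb1 hb2) (mul_ne_zero
      (mul_ne_zero (mul_ne_zero one_sub_t_ne one_sub_q_ne) (pow_ne_zero _ hW0))
      (mul_ne_zero hS0 (mul_ne_zero hPR1ne hPR2ne)))]
  generalize (∏ x ∈ Finset.filter (fun a => a.2 ≤ m) Add,
      (t ^ x.1 * q ^ x.2 - q * t * (t ^ n * q ^ m))) = A1
  generalize (∏ x ∈ Finset.filter (fun a => a.1 ≤ n) Add,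
      (t ^ x.1 * q ^ x.2 - q * t * (t ^ n * q ^ m))) = A2
  generalize (∏ x ∈ Finset.filter (fun x => x.2 < m) Rem,
      (t ^ x.1 * q ^ x.2 - t ^ n * q ^ m)) = R1
  generalize (∏ x ∈ Finset.filter (fun x => x.1 < n) Rem,
      (t ^ x.1 * q ^ x.2 - t ^ n * q ^ m)) = R2
  ring_nf

end
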